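/- Let m ≥ n, let 1 ≤ ϱ < s < l, and let A ∈ ℝ^{m×n} admit an SVD partition at level ϱ with Σ₁ invertible. Let Ω ∈ ℝ^{n×s} and Φ ∈ ℝ^{n×l} be independent standard Gaussian matrices. Then the matrix F₁ = I + Σ₁Φ₁Φ₂ᵀΣ₂²Ω₂Ω₁†Σ₁⁻²(Φ₁Φ₁ᵀ)⁻¹Σ₁⁻¹ ∈ ℝ^{ϱ×ϱ} is invertible with probability 1. -/

import Mathlib

open MeasureTheory ProbabilityTheory Matrix
open scoped ENNReal

noncomputable section

namespace RSVD

instance (m n : ℕ) : MeasurableSpace (Matrix (Fin m) (Fin n) ℝ) :=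
  inferInstanceAs (MeasurableSpace (Fin m → Fin n → ℝ))

/-- The law of an `m × n` random matrix with i.i.d. standard normal entries. -/
def stdGaussian (m n : ℕ) : Measure (Matrix (Fin m) (Fin n) ℝ) :=
  Measure.pi fun _ : Fin m => Measure.pi fun _ : Fin n => gaussianReal 0 1

/-- The Frobenius norm of a real matrix. -/
def frobNorm {m n : ℕ} (M : Matrix (Fin m) (Fin n) ℝ) : ℝ :=
  Real.sqrt (∑ i, ∑ j, M i j ^ 2)

/-- `Mᵀ M` is Hermitian (restores a lemma removed from Mathlib). -/
theorem Matrix.isHermitian_transpose_mul_self {m n : ℕ} (M : Matrix (Fin m) (Fin n) ℝ) :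
    (Mᵀ * M).IsHermitian := by
  rw [IsHermitian, conjTranspose_eq_transpose_of_trivial, transpose_mul, transpose_transpose]

/-- The `i`-th largest singular value of `M` (indexing is 1-based); `0` out of range. -/
def singularValue {m n : ℕ} (M : Matrix (Fin m) (Fin n) ℝ) (i : ℕ) : ℝ :=
  if h : 1 ≤ i ∧ i ≤ n then
    Real.sqrt
      (((Matrix.isHermitian_transpose_mul_self M).eigenvalues ∘
          Tuple.sort (Matrix.isHermitian_transpose_mul_self M).eigenvalues)
        (Fin.rev ⟨i - 1, by omega⟩))
  else 0

/-- The spectral norm (largest singular value). -/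
def specNorm {m n : ℕ} (M : Matrix (Fin m) (Fin n) ℝ) : ℝ :=
  singularValue M 1

/-- The tail energy `τ_k(M) = (∑_{i ≥ k} σ_i(M)²)^{1/2}`. -/
def tailEnergy {m n : ℕ} (M : Matrix (Fin m) (Fin n) ℝ) (k : ℕ) : ℝ :=
  Real.sqrt (∑ i ∈ Finset.Icc k n, singularValue M i ^ 2)

/-- The Schatten-`p` norm, with `p = ∞` giving the spectral norm. -/
def schattenNorm {m n : ℕ} (M : Matrix (Fin m) (Fin n) ℝ) (p : ℝ≥0∞) : ℝ :=
  if p = ∞ then specNorm M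
  else (∑ i ∈ Finset.Icc 1 n, singularValue M i ^ p.toReal) ^ (1 / p.toReal)

/-- Moore–Penrose pseudoinverse of a full-row-rank matrix: `G† = Gᵀ (G Gᵀ)⁻¹`. -/
def pinvRow {a b : ℕ} (G : Matrix (Fin a) (Fin b) ℝ) : Matrix (Fin b) (Fin a) ℝ :=
  Gᵀ * (G * Gᵀ)⁻¹

/-- Moore–Penrose pseudoinverse of a full-column-rank matrix: `G† = (Gᵀ G)⁻¹ Gᵀ`. -/
def pinvCol {a b : ℕ} (G : Matrix (Fin a) (Fin b) ℝ) : Matrix (Fin b) (Fin a) ℝ :=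
  (Gᵀ * G)⁻¹ * Gᵀ

/-- The column space of a matrix, as a subspace of Euclidean space. -/
def colSpace {m k : ℕ} (M : Matrix (Fin m) (Fin k) ℝ) :
    Submodule ℝ (EuclideanSpace ℝ (Fin m)) :=
  LinearMap.range (Matrix.toEuclideanLin M)

/-- The matrix of the orthogonal projection onto the column space of `M`. -/
def projCol {m k : ℕ} (M : Matrix (Fin m) (Fin k) ℝ) : Matrix (Fin m) (Fin m) ℝ :=
  Matrix.toEuclideanLin.symm
    (((colSpace M).subtypeL.comp ((colSpace M).orthogonalProjectionOnto)).toLinearMap)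

/-- An SVD partition of `A ∈ ℝ^{m×n}` at level `ϱ` (`1 ≤ ϱ < n`):
`A = U Σ Vᵀ` with `U, V` having orthonormal columns and `Σ` diagonal with
nonincreasing nonnegative entries. -/
structure SVDPartition (m n ϱ : ℕ) (A : Matrix (Fin m) (Fin n) ℝ) where
  U : Matrix (Fin m) (Fin n) ℝ
  V : Matrix (Fin n) (Fin n) ℝ
  σ : Fin n → ℝ
  hU : Uᵀ * U = 1
  hV : Vᵀ * V = 1
  hmono : ∀ i j : Fin n, i ≤ j → σ j ≤ σ i
  hnonneg : ∀ i, 0 ≤ σ i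
  hA : A = U * Matrix.diagonal σ * Vᵀ
  hϱ0 : 0 < ϱ
  hϱn : ϱ < n

namespace SVDPartition

variable {m n ϱ : ℕ} {A : Matrix (Fin m) (Fin n) ℝ}

/-- `Σ₁ = diag(σ₁, …, σ_ϱ)`. -/
def Sig1 (P : SVDPartition m n ϱ A) : Matrix (Fin ϱ) (Fin ϱ) ℝ :=
  Matrix.diagonal fun i => P.σ (Fin.castLE P.hϱn.le i)

/-- `Σ₂ = diag(σ_{ϱ+1}, …, σ_n)`. -/
def Sig2 (P : SVDPartition m n ϱ A) : Matrix (Fin (n - ϱ)) (Fin (n - ϱ)) ℝ :=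
  Matrix.diagonal fun i : Fin (n - ϱ) => P.σ ⟨ϱ + (i : ℕ), by have h := i.isLt; omega⟩

/-- `V₁`, the first `ϱ` columns of `V`. -/
def V1 (P : SVDPartition m n ϱ A) : Matrix (Fin n) (Fin ϱ) ℝ :=
  Matrix.of fun i j => P.V i (Fin.castLE P.hϱn.le j)

/-- `V₂`, the last `n - ϱ` columns of `V`. -/
def V2 (P : SVDPartition m n ϱ A) : Matrix (Fin n) (Fin (n - ϱ)) ℝ :=
  Matrix.of fun i (j : Fin (n - ϱ)) => P.V i ⟨ϱ + (j : ℕ), by have h := j.isLt; omega⟩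

/-- `σ_ϱ(A)`, the `ϱ`-th singular value (1-based). -/
def sigmaLast (P : SVDPartition m n ϱ A) : ℝ :=
  P.σ ⟨ϱ - 1, by have h0 := P.hϱ0; have h1 := P.hϱn; omega⟩

/-- `σ_{ϱ+1}(A)`, the `(ϱ+1)`-st singular value (1-based). -/
def sigmaNext (P : SVDPartition m n ϱ A) : ℝ :=
  P.σ ⟨ϱ, P.hϱn⟩

/-- `H = Σ₂² Ω₂ Ω₁† Σ₁⁻²`. -/
def Hmat (P : SVDPartition m n ϱ A) {s : ℕ} (Ω : Matrix (Fin n) (Fin s) ℝ) :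
    Matrix (Fin (n - ϱ)) (Fin ϱ) ℝ :=
  P.Sig2 ^ 2 * (P.V2ᵀ * Ω) * pinvRow (P.V1ᵀ * Ω) * P.Sig1⁻¹ ^ 2

/-- `I + Φ₁ Φ₂ᵀ H (Φ₁ Φ₁ᵀ)⁻¹`. -/
def innerMat (P : SVDPartition m n ϱ A) {s l : ℕ}
    (Ω : Matrix (Fin n) (Fin s) ℝ) (Φ : Matrix (Fin n) (Fin l) ℝ) :
    Matrix (Fin ϱ) (Fin ϱ) ℝ :=
  1 + (P.V1ᵀ * Φ) * (P.V2ᵀ * Φ)ᵀ * P.Hmat Ω * ((P.V1ᵀ * Φ) * (P.V1ᵀ * Φ)ᵀ)⁻¹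

end SVDPartition


/-! ### Auxiliary machinery for the proof of Statement 6 -/

section PolyNull

open MvPolynomial

lemma measurable_mveval {k : Type*} [Fintype k] (p : MvPolynomial k ℝ) :
    Measurable fun x : k → ℝ => MvPolynomial.eval x p := by
  induction p using MvPolynomial.induction_on with
  | C a => simp
  | add p q hp hq => simpa [map_add, Pi.add_def] using hp.add hq
  | mul_X p i hp => simpa [_root_.map_mul, Pi.mul_def] using hp.mul (measurable_pi_apply i)

lemma poly_null_core : ∀ (k : ℕ) (μ : Fin k → Measure ℝ), (∀ i, SigmaFinite (μ i)) →
    (∀ i, NullSingletonClass (μ i)) → ∀ (p : MvPolynomial (Fin k) ℝ), p ≠ 0 →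
    Measure.pi μ {x | MvPolynomial.eval x p = 0} = 0 := by
  intro k
  induction k with
  | zero =>
    intro μ _ _ p hp
    obtain ⟨c, rfl⟩ := MvPolynomial.C_surjective (Fin 0) p
    have hc : c ≠ 0 := fun h => hp (by simp [h])
    have h0 : {x : Fin 0 → ℝ | MvPolynomial.eval x (MvPolynomial.C c) = 0} = ∅ := by
      ext x; simp [hc]
    rw [h0, measure_empty]
  | succ k ih =>
    intro μ hσ hna p hp
    haveI := hσ
    haveI := hna
    set q := MvPolynomial.finSuccEquiv ℝ k p with hq
    have hq0 : q ≠ 0 := by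
      simp only [hq, Ne, EmbeddingLike.map_eq_zero_iff]; exact hp
    obtain ⟨j, hj⟩ : ∃ j, q.coeff j ≠ 0 := by
      by_contra h
      push_neg at h
      exact hq0 (Polynomial.ext fun n => by simp [h n])
    set ν := Measure.pi fun i : Fin k => μ i.succ with hν
    haveI : ∀ i : Fin k, SigmaFinite (μ i.succ) := fun i => hσ _
    haveI : ∀ i : Fin k, NullSingletonClass (μ i.succ) := fun i => hna _
    have ihc := ih (fun i => μ i.succ) (fun i => hσ _) (fun i => hna _) (q.coeff j) hj
    have hmeas : MeasurableSet {x : Fin (k+1) → ℝ | MvPolynomial.eval x p = 0} :=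
      (measurable_mveval p) (measurableSet_singleton 0)
    have hmp := (measurePreserving_piFinSuccAbove μ 0).symm
    set e := (MeasurableEquiv.piFinSuccAbove (fun _ : Fin (k+1) => ℝ) 0)
    have key : Measure.pi μ {x | MvPolynomial.eval x p = 0}
        = ((μ 0).prod (Measure.pi fun i : Fin k => μ ((0 : Fin (k+1)).succAbove i)))
          (e.symm ⁻¹' {x | MvPolynomial.eval x p = 0}) := by
      rw [hmp.measure_preimage hmeas.nullMeasurableSet]
    rw [key]
    have hsucc : (fun i : Fin k => μ ((0 : Fin (k+1)).succAbove i)) = fun i => μ i.succ := by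
      funext i; rw [Fin.succAbove_zero]
    rw [hsucc]
    have hpre : e.symm ⁻¹' {x | MvPolynomial.eval x p = 0}
        = {ax : ℝ × (Fin k → ℝ) | MvPolynomial.eval (Fin.cons ax.1 ax.2) p = 0} := by
      ext ⟨a, x⟩
      simp only [Set.mem_preimage, Set.mem_setOf_eq]
      have : e.symm (a, x) = Fin.cons a x := by
        show (Fin.insertNthEquiv (fun _ => ℝ) 0).toFun (a, x) = Fin.cons a x
        simp [Fin.insertNthEquiv, Fin.insertNth_zero']
      rw [this]
    rw [hpre]
    have hmeas2 : MeasurableSet {ax : ℝ × (Fin k → ℝ) |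
        MvPolynomial.eval (Fin.cons ax.1 ax.2) p = 0} := by
      have : Measurable fun ax : ℝ × (Fin k → ℝ) => (Fin.cons ax.1 ax.2 : Fin (k+1) → ℝ) := by
        refine measurable_pi_lambda _ fun i => ?_
        refine Fin.cases ?_ ?_ i
        · simpa using measurable_fst
        · intro i; simpa [Function.comp_def] using (measurable_pi_apply i).comp measurable_snd
      exact ((measurable_mveval p).comp this) (measurableSet_singleton 0)
    rw [Measure.prod_apply_symm hmeas2]
    have hae : ∀ᵐ x ∂ν, (μ 0) ((fun a => (a, x)) ⁻¹' {ax : ℝ × (Fin k → ℝ) |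
        MvPolynomial.eval (Fin.cons ax.1 ax.2) p = 0}) = 0 := by
      have h1 : ∀ᵐ x ∂ν, MvPolynomial.eval x (q.coeff j) ≠ 0 := by
        rw [ae_iff]; simpa using ihc
      filter_upwards [h1] with x hx
      set q' : Polynomial ℝ := q.map (MvPolynomial.eval x) with hq'def
      have hq' : q' ≠ 0 := fun h => hx (by
        have h2 := Polynomial.coeff_map (MvPolynomial.eval x) j (p := q)
        rw [← hq'def, h] at h2
        simpa using h2.symm)
      have hsub : (fun a => (a, x)) ⁻¹' {ax : ℝ × (Fin k → ℝ) |
          MvPolynomial.eval (Fin.cons ax.1 ax.2) p = 0} ⊆ ↑q'.roots.toFinset := by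
        intro a ha
        simp only [Set.mem_preimage, Set.mem_setOf_eq] at ha
        rw [MvPolynomial.eval_eq_eval_mv_eval'] at ha
        simp only [Multiset.mem_toFinset, Finset.coe_sort_coe, Finset.mem_coe]
        rw [Polynomial.mem_roots hq']
        exact ha
      exact measure_mono_null hsub ((q'.roots.toFinset : Finset ℝ).countable_toSet.measure_zero _)
    calc ∫⁻ x, (μ 0) ((fun a => (a, x)) ⁻¹' _) ∂ν = ∫⁻ _, 0 ∂ν := lintegral_congr_ae hae
      _ = 0 := lintegral_zero

lemma poly_null {ι : Type*} [Fintype ι] (μ0 : Measure ℝ) [SigmaFinite μ0] [NullSingletonClass μ0]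
    (p : MvPolynomial ι ℝ) (hp : p ≠ 0) :
    Measure.pi (fun _ : ι => μ0) {x | MvPolynomial.eval x p = 0} = 0 := by
  classical
  set k := Fintype.card ι
  set f : Fin k ≃ ι := (Fintype.equivFin ι).symm
  have hmp := measurePreserving_piCongrLeft (fun _ : ι => μ0) f
  have hmeas : MeasurableSet {x : ι → ℝ | MvPolynomial.eval x p = 0} :=
    (measurable_mveval p) (measurableSet_singleton 0)
  rw [← hmp.measure_preimage hmeas.nullMeasurableSet]
  have hpre : (MeasurableEquiv.piCongrLeft (fun _ : ι => ℝ) f) ⁻¹' {x | MvPolynomial.eval x p = 0}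
      = {x : Fin k → ℝ | MvPolynomial.eval x (MvPolynomial.rename f.symm p) = 0} := by
    ext x
    simp only [Set.mem_preimage, Set.mem_setOf_eq, MvPolynomial.eval_rename]
    have : (MeasurableEquiv.piCongrLeft (fun _ : ι => ℝ) f) x = fun i => x (f.symm i) := by
      funext i
      show (Equiv.piCongrLeft (fun _ : ι => ℝ) f) x i = x (f.symm i)
      conv_lhs => rw [show i = f (f.symm i) by simp]
      rw [Equiv.piCongrLeft_apply_apply]
    rw [this]
    rfl
  rw [hpre]
  have hr : MvPolynomial.rename (f.symm : ι → Fin k) p ≠ 0 := by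
    intro h
    apply hp
    have := MvPolynomial.rename_injective (R := ℝ) (f.symm : ι → Fin k) f.symm.injective
    apply this
    rw [h, map_zero]
  exact poly_null_core k (fun _ => μ0) (fun _ => inferInstance) (fun _ => inferInstance) _ hr

end PolyNull

section PolyAlg

open MvPolynomial

noncomputable def polyAlg (ι : Type*) [Fintype ι] : Subalgebra ℝ ((ι → ℝ) → ℝ) :=
  (MvPolynomial.aeval (R := ℝ) (fun i (x : ι → ℝ) => x i)).range

variable {ι : Type*} [Fintype ι]

lemma aeval_coords (p : MvPolynomial ι ℝ) (x : ι → ℝ) :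
    (MvPolynomial.aeval (R := ℝ) (fun i (y : ι → ℝ) => y i) p) x = MvPolynomial.eval x p := by
  induction p using MvPolynomial.induction_on with
  | C a => simp [Pi.algebraMap_apply]
  | add p q hp hq => simp [map_add, hp, hq]
  | mul_X p i hp => simp [_root_.map_mul, hp]

lemma coord_mem (i : ι) : (fun y : ι → ℝ => y i) ∈ polyAlg ι :=
  ⟨MvPolynomial.X i, by funext x; simp⟩

lemma const_mem (r : ℝ) : (fun _ : ι → ℝ => r) ∈ polyAlg ι := by
  have := (polyAlg ι).algebraMap_mem r
  convert this using 1
  rfl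

def MatPoly {a b : ℕ} (N : (ι → ℝ) → Matrix (Fin a) (Fin b) ℝ) : Prop :=
  ∀ i j, (fun y => N y i j) ∈ polyAlg ι

lemma MatPoly.const {a b : ℕ} (C : Matrix (Fin a) (Fin b) ℝ) :
    MatPoly (fun _ : ι → ℝ => C) := fun i j => const_mem (C i j)

lemma MatPoly.mul {a b c : ℕ} {A : (ι → ℝ) → Matrix (Fin a) (Fin b) ℝ}
    {B : (ι → ℝ) → Matrix (Fin b) (Fin c) ℝ} (hA : MatPoly A) (hB : MatPoly B) :
    MatPoly (fun y => A y * B y) := by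
  intro i j
  have : (fun y => (A y * B y) i j) = ∑ k : Fin b, fun y => A y i k * B y k j := by
    funext y; simp [Matrix.mul_apply]
  rw [this]
  exact Subalgebra.sum_mem _ fun k _ => mul_mem (hA i k) (hB k j)

lemma MatPoly.transpose {a b : ℕ} {A : (ι → ℝ) → Matrix (Fin a) (Fin b) ℝ}
    (hA : MatPoly A) : MatPoly (fun y => (A y)ᵀ) := fun i j => hA j i

lemma MatPoly.det {a : ℕ} {A : (ι → ℝ) → Matrix (Fin a) (Fin a) ℝ} (hA : MatPoly A) :
    (fun y => (A y).det) ∈ polyAlg ι := by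
  have h1 : (fun y => (A y).det)
      = ∑ σ : Equiv.Perm (Fin a), fun y =>
          ((Equiv.Perm.sign σ : ℤ) : ℝ) * ∏ i, A y (σ i) i := by
    funext y
    simp only [Matrix.det_apply', Finset.sum_apply]
  rw [h1]
  refine Subalgebra.sum_mem _ fun σ _ => ?_
  have h2 : (fun y => ((Equiv.Perm.sign σ : ℤ) : ℝ) * ∏ i, A y (σ i) i)
      = (fun _ => ((Equiv.Perm.sign σ : ℤ) : ℝ)) * ∏ i : Fin a, fun y => A y (σ i) i := by
    funext y; simp [Finset.prod_apply]
  rw [h2]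
  exact mul_mem (const_mem _) (Subalgebra.prod_mem _ fun i _ => hA (σ i) i)

lemma MatPoly.adjugate {a : ℕ} {A : (ι → ℝ) → Matrix (Fin a) (Fin a) ℝ} (hA : MatPoly A) :
    MatPoly (fun y => (A y).adjugate) := by
  intro i j
  have h1 : (fun y => (A y).adjugate i j)
      = fun y => ((A y).updateRow j (Pi.single i 1)).det := by
    funext y; rw [Matrix.adjugate_apply]
  rw [h1]
  refine MatPoly.det ?_
  intro i' k
  by_cases h : i' = j
  · subst h
    simpa [Matrix.updateRow_apply] using const_mem (ι := ι) ((Pi.single i (1:ℝ) : Fin a → ℝ) k)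
  · simpa [Matrix.updateRow_apply, h] using hA i' k

lemma mem_polyAlg_measurable {f : (ι → ℝ) → ℝ} (hf : f ∈ polyAlg ι) : Measurable f := by
  obtain ⟨p, rfl⟩ := hf
  have hm : Measurable fun x : ι → ℝ => MvPolynomial.eval x p := measurable_mveval p
  have he : (MvPolynomial.aeval (R := ℝ) (fun i (y : ι → ℝ) => y i)) p
      = fun x => MvPolynomial.eval x p := funext (aeval_coords p)
  exact he ▸ hm

instance : NullSingletonClass (gaussianReal 0 1) :=
  ⟨fun a => (gaussianReal_absolutelyContinuous 0 one_ne_zero) (measure_singleton a)⟩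

lemma polyAlg_null {f : (ι → ℝ) → ℝ} (hf : f ∈ polyAlg ι) {y₀ : ι → ℝ} (h0 : f y₀ ≠ 0) :
    Measure.pi (fun _ : ι => gaussianReal 0 1) {y | f y = 0} = 0 := by
  obtain ⟨p, hp⟩ := hf
  have hfp : ∀ y, f y = MvPolynomial.eval y p := fun y => by
    rw [← aeval_coords p y]; exact congrFun hp.symm y
  have hne : p ≠ 0 := fun h => h0 (by rw [hfp y₀, h]; simp)
  have hset : {y | f y = 0} = {y | MvPolynomial.eval y p = 0} := by
    ext y; rw [Set.mem_setOf_eq, Set.mem_setOf_eq, hfp]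
  rw [hset]
  exact poly_null (gaussianReal 0 1) p hne

end PolyAlg

section Flatten

/-- The standard Gaussian measure on the plain function type. -/
def stdGaussianFn (m n : ℕ) : Measure ((Fin m) → (Fin n) → ℝ) :=
  Measure.pi fun _ : Fin m => Measure.pi fun _ : Fin n => gaussianReal 0 1

instance (m n : ℕ) : IsProbabilityMeasure (stdGaussianFn m n) := by
  rw [stdGaussianFn]; infer_instance

instance (m n : ℕ) : IsProbabilityMeasure (stdGaussian m n) :=
  inferInstanceAs (IsProbabilityMeasure (stdGaussianFn m n))

abbrev Idx (n s l : ℕ) := (Fin n × Fin s) ⊕ (Fin n × Fin l)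

lemma mp_curry (a b : ℕ) :
    MeasurePreserving (fun M : Fin a → Fin b → ℝ => fun p : Fin a × Fin b => M p.1 p.2)
      (stdGaussianFn a b) (Measure.pi fun _ : Fin a × Fin b => gaussianReal 0 1) := by
  constructor
  · exact measurable_pi_lambda _ fun p => (measurable_pi_apply p.2).comp (measurable_pi_apply p.1)
  · refine (Measure.pi_eq fun s hs => ?_).symm
    rw [Measure.map_apply
      (measurable_pi_lambda _ fun p => (measurable_pi_apply p.2).comp (measurable_pi_apply p.1))
      (MeasurableSet.univ_pi hs)]
    have hpre : (fun M : Fin a → Fin b → ℝ => fun p : Fin a × Fin b => M p.1 p.2) ⁻¹'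
        Set.univ.pi s = Set.univ.pi fun i => Set.univ.pi fun j => s (i, j) := by
      ext M
      simp only [Set.mem_preimage, Set.mem_pi, Set.mem_univ, forall_true_left]
      exact ⟨fun h i j => h (i, j), fun h p => h p.1 p.2⟩
    rw [hpre, stdGaussianFn]
    rw [Measure.pi_pi]
    simp_rw [Measure.pi_pi]
    rw [Fintype.prod_prod_type]

def Tmap (n s l : ℕ) (x : (Fin n → Fin s → ℝ) × (Fin n → Fin l → ℝ)) : Idx n s l → ℝ :=
  (MeasurableEquiv.sumPiEquivProdPi (fun _ : Idx n s l => ℝ)).symm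
    (fun p => x.1 p.1 p.2, fun p => x.2 p.1 p.2)

lemma Tmap_inl (n s l : ℕ) (x) (p : Fin n × Fin s) : Tmap n s l x (Sum.inl p) = x.1 p.1 p.2 := by
  simp [Tmap, MeasurableEquiv.sumPiEquivProdPi, Equiv.sumPiEquivProdPi]

lemma Tmap_inr (n s l : ℕ) (x) (p : Fin n × Fin l) : Tmap n s l x (Sum.inr p) = x.2 p.1 p.2 := by
  simp [Tmap, MeasurableEquiv.sumPiEquivProdPi, Equiv.sumPiEquivProdPi]

lemma mp_Tmap (n s l : ℕ) :
    MeasurePreserving (Tmap n s l) ((stdGaussianFn n s).prod (stdGaussianFn n l))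
      (Measure.pi fun _ : Idx n s l => gaussianReal 0 1) := by
  have h1 := (mp_curry n s).prod (mp_curry n l)
  have h2 := measurePreserving_sumPiEquivProdPi_symm (fun _ : Idx n s l => gaussianReal 0 1)
  exact h2.comp h1

lemma mp_Tmap_matrix (n s l : ℕ) :
    MeasurePreserving
      (fun x : Matrix (Fin n) (Fin s) ℝ × Matrix (Fin n) (Fin l) ℝ => Tmap n s l x)
      ((stdGaussian n s).prod (stdGaussian n l))
      (Measure.pi fun _ : Idx n s l => gaussianReal 0 1) := by
  exact mp_Tmap n s l

end Flatten

section MainAux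

variable {m n ϱ : ℕ} {A : Matrix (Fin m) (Fin n) ℝ}

/-- The `Ω`-matrix read off from a flattened sample point. -/
def OmF (n s l : ℕ) (y : Idx n s l → ℝ) : Matrix (Fin n) (Fin s) ℝ :=
  Matrix.of fun i j => y (Sum.inl (i, j))

/-- The `Φ`-matrix read off from a flattened sample point. -/
def PhF (n s l : ℕ) (y : Idx n s l → ℝ) : Matrix (Fin n) (Fin l) ℝ :=
  Matrix.of fun i j => y (Sum.inr (i, j))

/-- `c(y) = det(Ω₁Ω₁ᵀ) det(Φ₁Φ₁ᵀ)`. -/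
noncomputable def cF (P : SVDPartition m n ϱ A) (s l : ℕ) (y : Idx n s l → ℝ) : ℝ :=
  ((P.V1ᵀ * OmF n s l y) * (P.V1ᵀ * OmF n s l y)ᵀ).det *
    ((P.V1ᵀ * PhF n s l y) * (P.V1ᵀ * PhF n s l y)ᵀ).det

/-- The "adjugate" version of the matrix in `statement6`, with all inverses cleared. -/
noncomputable def MF (P : SVDPartition m n ϱ A) (s l : ℕ) (y : Idx n s l → ℝ) :
    Matrix (Fin ϱ) (Fin ϱ) ℝ :=
  P.Sig1 * (P.V1ᵀ * PhF n s l y) * (P.V2ᵀ * PhF n s l y)ᵀ * P.Sig2 ^ 2 *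
    (P.V2ᵀ * OmF n s l y) * (P.V1ᵀ * OmF n s l y)ᵀ *
    ((P.V1ᵀ * OmF n s l y) * (P.V1ᵀ * OmF n s l y)ᵀ).adjugate * P.Sig1⁻¹ ^ 2 *
    ((P.V1ᵀ * PhF n s l y) * (P.V1ᵀ * PhF n s l y)ᵀ).adjugate * P.Sig1⁻¹

noncomputable def GF (P : SVDPartition m n ϱ A) (s l : ℕ) (y : Idx n s l → ℝ) : ℝ :=
  (cF P s l y • (1 : Matrix (Fin ϱ) (Fin ϱ) ℝ) + MF P s l y).det

lemma cF_mem (P : SVDPartition m n ϱ A) (s l : ℕ) : cF P s l ∈ polyAlg (Idx n s l) := by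
  have hOm : MatPoly (OmF n s l) := fun i j => coord_mem (Sum.inl (i, j))
  have hPh : MatPoly (PhF n s l) := fun i j => coord_mem (Sum.inr (i, j))
  have hO1 : MatPoly (fun y => P.V1ᵀ * OmF n s l y) := (MatPoly.const _).mul hOm
  have hF1 : MatPoly (fun y => P.V1ᵀ * PhF n s l y) := (MatPoly.const _).mul hPh
  exact mul_mem (MatPoly.det (hO1.mul hO1.transpose)) (MatPoly.det (hF1.mul hF1.transpose))

lemma GF_mem (P : SVDPartition m n ϱ A) (s l : ℕ) : GF P s l ∈ polyAlg (Idx n s l) := by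
  have hOm : MatPoly (OmF n s l) := fun i j => coord_mem (Sum.inl (i, j))
  have hPh : MatPoly (PhF n s l) := fun i j => coord_mem (Sum.inr (i, j))
  have hO1 : MatPoly (fun y => P.V1ᵀ * OmF n s l y) := (MatPoly.const _).mul hOm
  have hO2 : MatPoly (fun y => P.V2ᵀ * OmF n s l y) := (MatPoly.const _).mul hOm
  have hF1 : MatPoly (fun y => P.V1ᵀ * PhF n s l y) := (MatPoly.const _).mul hPh
  have hF2 : MatPoly (fun y => P.V2ᵀ * PhF n s l y) := (MatPoly.const _).mul hPh
  have hM : MatPoly (MF P s l) := by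
    refine MatPoly.mul (MatPoly.mul (MatPoly.mul (MatPoly.mul (MatPoly.mul (MatPoly.mul
      (MatPoly.mul (MatPoly.mul (MatPoly.mul (MatPoly.const P.Sig1) hF1) hF2.transpose)
      (MatPoly.const (P.Sig2 ^ 2))) hO2) hO1.transpose)
      ((hO1.mul hO1.transpose).adjugate)) (MatPoly.const (P.Sig1⁻¹ ^ 2)))
      ((hF1.mul hF1.transpose).adjugate)) (MatPoly.const P.Sig1⁻¹)
  have hc := cF_mem P s l
  refine MatPoly.det ?_
  intro i j
  have h1 : (fun y => (cF P s l y • (1 : Matrix (Fin ϱ) (Fin ϱ) ℝ) + MF P s l y) i j)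
      = fun y => cF P s l y * (1 : Matrix (Fin ϱ) (Fin ϱ) ℝ) i j + MF P s l y i j := by
    funext y
    simp [Matrix.add_apply, Matrix.smul_apply, smul_eq_mul]
  rw [h1]
  exact add_mem (mul_mem hc (const_mem _)) (hM i j)

/-- The special evaluation point witnessing that `cF` and `GF` are not identically zero. -/
noncomputable def W0 (P : SVDPartition m n ϱ A) (w : ℕ) : Matrix (Fin n) (Fin w) ℝ :=
  Matrix.of fun i (j : Fin w) => if h : (j : ℕ) < ϱ then P.V i ⟨j, h.trans P.hϱn⟩ else 0

noncomputable def y0 (P : SVDPartition m n ϱ A) (s l : ℕ) : Idx n s l → ℝ :=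
  Sum.elim (fun p : Fin n × Fin s => W0 P s p.1 p.2) (fun p : Fin n × Fin l => W0 P l p.1 p.2)

lemma VtV (P : SVDPartition m n ϱ A) (a b : Fin n) :
    (∑ i, P.V i a * P.V i b) = if a = b then 1 else 0 := by
  have h : (P.Vᵀ * P.V) a b = (1 : Matrix (Fin n) (Fin n) ℝ) a b := by rw [P.hV]
  simpa [Matrix.mul_apply, Matrix.transpose_apply, Matrix.one_apply] using h

lemma V1_mul_W0 (P : SVDPartition m n ϱ A) (w : ℕ) :
    P.V1ᵀ * W0 P w
      = Matrix.of fun (a : Fin ϱ) (j : Fin w) => if (j : ℕ) = (a : ℕ) then 1 else 0 := by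
  ext a j
  simp only [Matrix.mul_apply, Matrix.transpose_apply, SVDPartition.V1, W0, Matrix.of_apply]
  by_cases h : (j : ℕ) < ϱ
  · simp only [h, dif_pos]
    rw [show (∑ i, P.V i (Fin.castLE P.hϱn.le a) * P.V i ⟨(j : ℕ), h.trans P.hϱn⟩)
        = if Fin.castLE P.hϱn.le a = ⟨(j : ℕ), h.trans P.hϱn⟩ then 1 else 0 from VtV P _ _]
    have : (Fin.castLE P.hϱn.le a = (⟨(j : ℕ), h.trans P.hϱn⟩ : Fin n)) ↔ ((j : ℕ) = (a : ℕ)) := by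
      rw [Fin.ext_iff]
      simp [eq_comm]
    simp [this]
  · have hja : ¬ ((j : ℕ) = (a : ℕ)) := fun hc => h (hc ▸ a.isLt)
    simp [h, hja]

lemma V2_mul_W0 (P : SVDPartition m n ϱ A) (w : ℕ) : P.V2ᵀ * W0 P w = 0 := by
  ext a j
  simp only [Matrix.mul_apply, Matrix.transpose_apply, SVDPartition.V2, W0, Matrix.of_apply,
    Matrix.zero_apply]
  by_cases h : (j : ℕ) < ϱ
  · simp only [h, dif_pos]
    rw [show (∑ i, P.V i ⟨ϱ + (a : ℕ), by have := a.isLt; omega⟩ * P.V i ⟨(j : ℕ), h.trans P.hϱn⟩)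
        = if (⟨ϱ + (a : ℕ), by have := a.isLt; omega⟩ : Fin n)
            = ⟨(j : ℕ), h.trans P.hϱn⟩ then 1 else 0 from VtV P _ _]
    have : ¬ ((⟨ϱ + (a : ℕ), by have := a.isLt; omega⟩ : Fin n)
        = (⟨(j : ℕ), h.trans P.hϱn⟩ : Fin n)) := by
      rw [Fin.ext_iff]; simp; omega
    simp [this]
  · simp [h]

lemma W0_gram (P : SVDPartition m n ϱ A) (w : ℕ) (hw : ϱ ≤ w) :
    (P.V1ᵀ * W0 P w) * (P.V1ᵀ * W0 P w)ᵀ = 1 := by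
  rw [V1_mul_W0]
  ext a b
  simp only [Matrix.mul_apply, Matrix.transpose_apply, Matrix.of_apply, Matrix.one_apply]
  rw [Finset.sum_eq_single (⟨(a : ℕ), lt_of_lt_of_le a.isLt hw⟩ : Fin w)]
  · simp [Fin.ext_iff, eq_comm]
  · intro j _ hj
    have : ¬ ((j : ℕ) = (a : ℕ)) := fun hc => hj (by rw [Fin.ext_iff]; exact hc)
    simp [this]
  · intro h
    exact absurd (Finset.mem_univ _) h

lemma OmF_y0 (P : SVDPartition m n ϱ A) (s l : ℕ) : OmF n s l (y0 P s l) = W0 P s := rfl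

lemma PhF_y0 (P : SVDPartition m n ϱ A) (s l : ℕ) : PhF n s l (y0 P s l) = W0 P l := rfl

lemma cF_y0 (P : SVDPartition m n ϱ A) {s l : ℕ} (hs : ϱ ≤ s) (hl : ϱ ≤ l) :
    cF P s l (y0 P s l) = 1 := by
  rw [cF, OmF_y0, PhF_y0, W0_gram P s hs, W0_gram P l hl, Matrix.det_one, mul_one]

lemma GF_y0 (P : SVDPartition m n ϱ A) {s l : ℕ} (hs : ϱ ≤ s) (hl : ϱ ≤ l) :
    GF P s l (y0 P s l) = 1 := by
  have hM : MF P s l (y0 P s l) = 0 := by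
    rw [MF, OmF_y0, PhF_y0, V2_mul_W0]
    simp [Matrix.mul_zero, Matrix.zero_mul]
  rw [GF, hM, cF_y0 P hs hl]
  simp

end MainAux

/-- Proposition 5.7 of the paper: almost sure invertibility of
`F₁ = I + Σ₁ Φ₁ Φ₂ᵀ Σ₂² Ω₂ Ω₁† Σ₁⁻² (Φ₁ Φ₁ᵀ)⁻¹ Σ₁⁻¹`. -/
theorem statement6 {m n ϱ s l : ℕ} (hmn : n ≤ m) (hϱs : ϱ < s) (hsl : s < l)
    (A : Matrix (Fin m) (Fin n) ℝ) (P : SVDPartition m n ϱ A)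
    (hSig1 : IsUnit P.Sig1.det) :
    ((stdGaussian n s).prod (stdGaussian n l))
        {x : Matrix (Fin n) (Fin s) ℝ × Matrix (Fin n) (Fin l) ℝ |
          IsUnit (1 + P.Sig1 * (P.V1ᵀ * x.2) * (P.V2ᵀ * x.2)ᵀ * P.Sig2 ^ 2 * (P.V2ᵀ * x.1)
              * pinvRow (P.V1ᵀ * x.1) * P.Sig1⁻¹ ^ 2 * ((P.V1ᵀ * x.2) * (P.V1ᵀ * x.2)ᵀ)⁻¹
              * P.Sig1⁻¹).det}
      = 1 := by
  classical
  have key : ∀ (S : Set (Matrix (Fin n) (Fin s) ℝ × Matrix (Fin n) (Fin l) ℝ)),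
      ((stdGaussian n s).prod (stdGaussian n l)) Sᶜ = 0 →
      ((stdGaussian n s).prod (stdGaussian n l)) S = 1 := by
    intro S hS
    refine le_antisymm prob_le_one ?_
    have hle := measure_union_le (μ := (stdGaussian n s).prod (stdGaussian n l)) S Sᶜ
    rw [Set.union_compl_self, measure_univ, hS, add_zero] at hle
    exact hle
  apply key
  -- The complement is the vanishing locus of the determinant.
  have hcompl : {x : Matrix (Fin n) (Fin s) ℝ × Matrix (Fin n) (Fin l) ℝ |
      IsUnit (1 + P.Sig1 * (P.V1ᵀ * x.2) * (P.V2ᵀ * x.2)ᵀ * P.Sig2 ^ 2 * (P.V2ᵀ * x.1)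
          * pinvRow (P.V1ᵀ * x.1) * P.Sig1⁻¹ ^ 2 * ((P.V1ᵀ * x.2) * (P.V1ᵀ * x.2)ᵀ)⁻¹
          * P.Sig1⁻¹).det}ᶜ
      = {x : Matrix (Fin n) (Fin s) ℝ × Matrix (Fin n) (Fin l) ℝ |
          (1 + P.Sig1 * (P.V1ᵀ * x.2) * (P.V2ᵀ * x.2)ᵀ * P.Sig2 ^ 2 * (P.V2ᵀ * x.1)
          * pinvRow (P.V1ᵀ * x.1) * P.Sig1⁻¹ ^ 2 * ((P.V1ᵀ * x.2) * (P.V1ᵀ * x.2)ᵀ)⁻¹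
          * P.Sig1⁻¹).det = 0} := by
    ext x
    simp [isUnit_iff_ne_zero]
  rw [hcompl]
  set Z : Set (Idx n s l → ℝ) := {y | cF P s l y = 0} ∪ {y | GF P s l y = 0} with hZ
  have hZmeas : MeasurableSet Z := by
    refine MeasurableSet.union ?_ ?_
    · exact (mem_polyAlg_measurable (cF_mem P s l)) (measurableSet_singleton 0)
    · exact (mem_polyAlg_measurable (GF_mem P s l)) (measurableSet_singleton 0)
  have hZnull : (Measure.pi fun _ : Idx n s l => gaussianReal 0 1) Z = 0 := by
    refine measure_union_null ?_ ?_
    · exact polyAlg_null (cF_mem P s l) (by rw [cF_y0 P hϱs.le (hϱs.trans hsl).le]; norm_num)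
    · exact polyAlg_null (GF_mem P s l) (by rw [GF_y0 P hϱs.le (hϱs.trans hsl).le]; norm_num)
  have hsub : {x : Matrix (Fin n) (Fin s) ℝ × Matrix (Fin n) (Fin l) ℝ |
      (1 + P.Sig1 * (P.V1ᵀ * x.2) * (P.V2ᵀ * x.2)ᵀ * P.Sig2 ^ 2 * (P.V2ᵀ * x.1)
          * pinvRow (P.V1ᵀ * x.1) * P.Sig1⁻¹ ^ 2 * ((P.V1ᵀ * x.2) * (P.V1ᵀ * x.2)ᵀ)⁻¹
          * P.Sig1⁻¹).det = 0} ⊆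
      (fun x : Matrix (Fin n) (Fin s) ℝ × Matrix (Fin n) (Fin l) ℝ => Tmap n s l x) ⁻¹' Z := by
    intro x hx
    simp only [Set.mem_setOf_eq] at hx
    set y := Tmap n s l x with hy
    have hOm : OmF n s l y = x.1 := by
      ext i j
      show y (Sum.inl (i, j)) = x.1 i j
      rw [hy]; exact Tmap_inl n s l x (i, j)
    have hPh : PhF n s l y = x.2 := by
      ext i j
      show y (Sum.inr (i, j)) = x.2 i j
      rw [hy]; exact Tmap_inr n s l x (i, j)
    by_cases hcy : cF P s l y = 0
    · exact Set.mem_union_left _ hcy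
    refine Set.mem_union_right _ ?_
    show GF P s l y = 0
    rw [← hOm, ← hPh] at hx
    set O1 := P.V1ᵀ * OmF n s l y with hO1
    set F1 := P.V1ᵀ * PhF n s l y with hF1
    set dQ := (O1 * O1ᵀ).det with hdQdef
    set dP := (F1 * F1ᵀ).det with hdPdef
    have hcval : cF P s l y = dQ * dP := rfl
    have hdQ : dQ ≠ 0 := fun h => hcy (by rw [hcval, h, zero_mul])
    have hdP : dP ≠ 0 := fun h => hcy (by rw [hcval, h, mul_zero])
    -- rewrite the inverses as adjugates
    have hBIG : P.Sig1 * F1 * (P.V2ᵀ * PhF n s l y)ᵀ * P.Sig2 ^ 2 * (P.V2ᵀ * OmF n s l y)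
          * pinvRow O1 * P.Sig1⁻¹ ^ 2 * (F1 * F1ᵀ)⁻¹ * P.Sig1⁻¹
        = (dQ⁻¹ * dP⁻¹) • MF P s l y := by
      rw [pinvRow, Matrix.inv_def (O1 * O1ᵀ), Matrix.inv_def (F1 * F1ᵀ),
        Ring.inverse_eq_inv, Ring.inverse_eq_inv, MF]
      rw [← hO1, ← hF1, ← hdQdef, ← hdPdef]
      simp only [Matrix.mul_smul, Matrix.smul_mul, smul_smul, Matrix.mul_assoc]
      congr 1
      ring
    have hscal : cF P s l y * (dQ⁻¹ * dP⁻¹) = 1 := by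
      rw [hcval]
      field_simp
    have hkey : cF P s l y • (1 + P.Sig1 * F1 * (P.V2ᵀ * PhF n s l y)ᵀ * P.Sig2 ^ 2
          * (P.V2ᵀ * OmF n s l y) * pinvRow O1 * P.Sig1⁻¹ ^ 2 * (F1 * F1ᵀ)⁻¹ * P.Sig1⁻¹)
        = cF P s l y • (1 : Matrix (Fin ϱ) (Fin ϱ) ℝ) + MF P s l y := by
      rw [smul_add, hBIG, smul_smul, hscal, one_smul]
    have : GF P s l y = 0 := by
      rw [GF, ← hkey, Matrix.det_smul, hx, mul_zero]
    exact this
  refine measure_mono_null hsub ?_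
  rw [(mp_Tmap_matrix n s l).measure_preimage hZmeas.nullMeasurableSet]
  exact hZnull

end RSVD
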